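/- Let E = ℝ^n with the Euclidean inner product. Let J : E → ℝ be convex, and let H : E → ℝ be convex and differentiable with gradient ∇H Lipschitz continuous with constant L > 0. Let u* be a minimizer of J + H and fix a step parameter δ ≥ L. For u ∈ E let P(u) denote the (unique) minimizer of v ↦ J(v) + (δ/2)‖v − (u − (1/δ)∇H(u))‖², and define R(w) = ⟨∇H(u*), w − u*⟩ + J(w) − J(u*) and T(w) = H(w) − H(u*) − ⟨∇H(u*), w − u*⟩. Assume the error-bound condition: for every M ∈ ℝ there exists a constant s(M) > 0 such that for every u ∈ E with (J + H)(u) ≤ M, writing v̄ = P(u), one has ‖v̄ − u*‖ ≤ s(M)·(R(v̄) + T(v̄)). Then the proximal-gradient iterates u^{k+1} = P(u^k), started from any u^0 ∈ E, converge linearly to u*: there exist C ≥ 0 and q ∈ [0,1) such that ‖u^k − u*‖ ≤ C·q^k for all k ≥ 0. -/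

import Mathlib

open scoped RealInnerProductSpace
open Set

section Aux
variable {n : ℕ}

private lemma pg_line_hasDerivAt (H : EuclideanSpace ℝ (Fin n) → ℝ)
    (H' : EuclideanSpace ℝ (Fin n) → EuclideanSpace ℝ (Fin n))
    (hgrad : ∀ x, HasGradientAt H (H' x) x)
    (u d : EuclideanSpace ℝ (Fin n)) (t : ℝ) :
    HasDerivAt (fun t : ℝ => H (u + t • d)) ⟪H' (u + t • d), d⟫ t := by
  have hγ : HasDerivAt (fun t : ℝ => u + t • d) d t := by
    simpa using ((hasDerivAt_id t).smul_const d).const_add u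
  have hF := (hgrad (u + t • d)).hasFDerivAt
  have h := hF.comp_hasDerivAt t hγ
  simp [InnerProductSpace.toDual_apply_apply] at h
  exact h

private lemma pg_line_convexOn (H : EuclideanSpace ℝ (Fin n) → ℝ) (hH : ConvexOn ℝ Set.univ H)
    (u d : EuclideanSpace ℝ (Fin n)) :
    ConvexOn ℝ Set.univ (fun t : ℝ => H (u + t • d)) := by
  refine ⟨convex_univ, fun x _ y _ a b ha hb hab => ?_⟩
  have h : u + (a • x + b • y) • d = a • (u + x • d) + b • (u + y • d) := by
    have h1 : a • (u + x • d) + b • (u + y • d) = (a + b) • u + (a • x + b • y) • d := by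
      simp only [smul_eq_mul]; module
    rw [h1, hab, one_smul]
  simp only []
  rw [h]
  exact hH.2 (mem_univ _) (mem_univ _) ha hb hab

private lemma pg_grad_ineq (H : EuclideanSpace ℝ (Fin n) → ℝ) (hH : ConvexOn ℝ Set.univ H)
    (H' : EuclideanSpace ℝ (Fin n) → EuclideanSpace ℝ (Fin n))
    (hgrad : ∀ x, HasGradientAt H (H' x) x) (u w : EuclideanSpace ℝ (Fin n)) :
    H u + ⟪H' u, w - u⟫ ≤ H w := by
  have hg := pg_line_hasDerivAt H H' hgrad u (w - u) 0
  simp only [zero_smul, add_zero] at hg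
  have hc := pg_line_convexOn H hH u (w - u)
  have h := hc.le_slope_of_hasDerivAt (mem_univ (0:ℝ)) (mem_univ (1:ℝ)) one_pos hg
  rw [slope_def_field] at h
  simp only [one_smul, zero_smul, add_zero, sub_zero, div_one] at h
  have he : u + (w - u) = w := by abel
  rw [he] at h
  linarith

private lemma pg_descent (H : EuclideanSpace ℝ (Fin n) → ℝ)
    (H' : EuclideanSpace ℝ (Fin n) → EuclideanSpace ℝ (Fin n))
    (hgrad : ∀ x, HasGradientAt H (H' x) x)
    (L : NNReal) (hLip : LipschitzWith L H') (u w : EuclideanSpace ℝ (Fin n)) :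
    H w ≤ H u + ⟪H' u, w - u⟫ + (L : ℝ) / 2 * ‖w - u‖ ^ 2 := by
  set d := w - u with hd
  set c : ℝ := (L : ℝ) * ‖d‖ ^ 2 with hc
  set φ : ℝ → ℝ := fun t => H (u + t • d) - t * ⟪H' u, d⟫ - c / 2 * t ^ 2 with hφdef
  have hφ : ∀ t : ℝ, HasDerivAt φ (⟪H' (u + t • d), d⟫ - ⟪H' u, d⟫ - c * t) t := by
    intro t
    have h1 := pg_line_hasDerivAt H H' hgrad u d t
    have h2 : HasDerivAt (fun t : ℝ => t * ⟪H' u, d⟫) ⟪H' u, d⟫ t := by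
      simpa using (hasDerivAt_id t).mul_const (⟪H' u, d⟫ : ℝ)
    have h3 : HasDerivAt (fun t : ℝ => c / 2 * t ^ 2) (c * t) t := by
      have h := (hasDerivAt_pow 2 t).const_mul (c / 2)
      exact h.congr_deriv (by norm_num; ring)
    exact (h1.sub h2).sub h3
  have hanti : AntitoneOn φ (Icc (0:ℝ) 1) := by
    apply antitoneOn_of_deriv_nonpos (convex_Icc 0 1)
    · exact fun t _ => ((hφ t).differentiableAt).continuousAt.continuousWithinAt
    · exact fun t _ => ((hφ t).differentiableAt).differentiableWithinAt
    · intro t ht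
      rw [interior_Icc] at ht
      rw [(hφ t).deriv]
      have hb : ⟪H' (u + t • d) - H' u, d⟫ ≤ c * t := by
        calc ⟪H' (u + t • d) - H' u, d⟫ ≤ ‖H' (u + t • d) - H' u‖ * ‖d‖ :=
              real_inner_le_norm _ _
          _ ≤ ((L : ℝ) * ‖(u + t • d) - u‖) * ‖d‖ := by
              have := hLip.dist_le_mul (u + t • d) u
              rw [dist_eq_norm, dist_eq_norm] at this
              exact mul_le_mul_of_nonneg_right this (norm_nonneg _)
          _ = c * t := by
              have : (u + t • d) - u = t • d := by abel
              rw [this, norm_smul, Real.norm_eq_abs, abs_of_pos ht.1, hc]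
              ring
      have heq : ⟪H' (u + t • d), d⟫ - ⟪H' u, d⟫ = ⟪H' (u + t • d) - H' u, d⟫ := by
        rw [inner_sub_left]
      linarith
  have h01 := hanti (left_mem_Icc.2 zero_le_one) (right_mem_Icc.2 zero_le_one) zero_le_one
  have hφ1 : φ 1 = H w - ⟪H' u, d⟫ - c / 2 := by
    have huw : u + d = w := by rw [hd]; abel
    simp [hφdef, huw]
  have hφ0 : φ 0 = H u := by simp [hφdef]
  rw [hφ1, hφ0] at h01
  have : c / 2 = (L : ℝ) / 2 * ‖w - u‖ ^ 2 := by rw [hc, hd]; ring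
  linarith

end Aux

/-- Linear convergence of the proximal-gradient iteration under the error-bound
condition (Lemma 1 of the paper). -/
theorem proximal_gradient_linear_convergence
    {n : ℕ} (J H : EuclideanSpace ℝ (Fin n) → ℝ)
    (hJ : ConvexOn ℝ Set.univ J) (hH : ConvexOn ℝ Set.univ H)
    (H' : EuclideanSpace ℝ (Fin n) → EuclideanSpace ℝ (Fin n))
    (hgrad : ∀ x, HasGradientAt H (H' x) x)
    (L : NNReal) (hL : 0 < L) (hLip : LipschitzWith L H')
    (ustar : EuclideanSpace ℝ (Fin n))
    (hustar : ∀ w, J ustar + H ustar ≤ J w + H w)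
    (δ : ℝ) (hδ : (L : ℝ) ≤ δ)
    (P : EuclideanSpace ℝ (Fin n) → EuclideanSpace ℝ (Fin n))
    (hP : ∀ u v, J (P u) + δ / 2 * ‖P u - (u - δ⁻¹ • H' u)‖ ^ 2 ≤
      J v + δ / 2 * ‖v - (u - δ⁻¹ • H' u)‖ ^ 2)
    (R T : EuclideanSpace ℝ (Fin n) → ℝ)
    (hR : ∀ w, R w = ⟪H' ustar, w - ustar⟫ + J w - J ustar)
    (hT : ∀ w, T w = H w - H ustar - ⟪H' ustar, w - ustar⟫)
    (herr : ∀ M : ℝ, ∃ s : ℝ, 0 < s ∧ ∀ u, J u + H u ≤ M →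
      ‖P u - ustar‖ ≤ s * (R (P u) + T (P u))) :
    ∀ u0 : EuclideanSpace ℝ (Fin n), ∃ C : ℝ, 0 ≤ C ∧ ∃ q : ℝ, 0 ≤ q ∧ q < 1 ∧
      ∀ k : ℕ, ‖P^[k] u0 - ustar‖ ≤ C * q ^ k := by
  intro u0
  have hδpos : (0:ℝ) < δ := lt_of_lt_of_le (by exact_mod_cast hL) hδ
  -- expansion of the prox objective
  have hexp : ∀ x u' : EuclideanSpace ℝ (Fin n),
      δ / 2 * ‖x - (u' - δ⁻¹ • H' u')‖ ^ 2 =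
        δ / 2 * ‖x - u'‖ ^ 2 + ⟪x - u', H' u'⟫ + δ⁻¹ / 2 * ‖H' u'‖ ^ 2 := by
    intro x u'
    have h1 : x - (u' - δ⁻¹ • H' u') = (x - u') + δ⁻¹ • H' u' := by abel
    rw [h1, norm_add_sq_real, real_inner_smul_right, norm_smul, Real.norm_eq_abs,
      abs_of_pos (by positivity : (0:ℝ) < δ⁻¹)]
    field_simp
  -- key inequality: F (P u) ≤ F w + δ/2 ‖w - u‖²
  have keyA : ∀ u w, J (P u) + H (P u) ≤ J w + H w + δ / 2 * ‖w - u‖ ^ 2 := by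
    intro u w
    have h0 := hP u w
    rw [hexp (P u) u, hexp w u] at h0
    have h1 := pg_descent H H' hgrad L hLip u (P u)
    have h2 := pg_grad_ineq H hH H' hgrad u w
    have h3 : (L : ℝ) / 2 * ‖P u - u‖ ^ 2 ≤ δ / 2 * ‖P u - u‖ ^ 2 := by
      have := sq_nonneg ‖P u - u‖
      nlinarith
    have hcomm1 : ⟪P u - u, H' u⟫ = ⟪H' u, P u - u⟫ := real_inner_comm _ _
    have hcomm2 : ⟪w - u, H' u⟫ = ⟪H' u, w - u⟫ := real_inner_comm _ _
    linarith
  set F : EuclideanSpace ℝ (Fin n) → ℝ := fun x => J x + H x with hFdef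
  set uk : ℕ → EuclideanSpace ℝ (Fin n) := fun k => P^[k] u0 with hukdef
  have huk : ∀ k, uk (k+1) = P (uk k) := by
    intro k; simp only [hukdef]; rw [Function.iterate_succ_apply']
  have hdesc : ∀ k, F (uk (k+1)) ≤ F (uk k) := by
    intro k
    have := keyA (uk k) (uk k)
    rw [← huk k] at this
    simpa using this
  have hlevel : ∀ k, F (uk k) ≤ F u0 := by
    intro k
    induction k with
    | zero => simp [hukdef]
    | succ m ih => exact le_trans (hdesc m) ih
  obtain ⟨s, hs, herrM⟩ := herr (J u0 + H u0)
  have hRT : ∀ w, R w + T w = F w - F ustar := by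
    intro w; rw [hR, hT, hFdef]; ring
  set a : ℕ → ℝ := fun k => F (uk k) - F ustar with hadef
  have ha0 : ∀ k, 0 ≤ a k := fun k => sub_nonneg.2 (hustar _)
  have hamono : ∀ j k, j ≤ k → a k ≤ a j := by
    intro j k hjk
    induction hjk with
    | refl => exact le_refl _
    | step h ih => exact le_trans (sub_le_sub_right (hdesc _) _) ih
  have herr' : ∀ k, ‖uk (k+1) - ustar‖ ≤ s * a (k+1) := by
    intro k
    have h := herrM (uk k) (hlevel k)
    rw [hRT] at h
    have hax : a (k+1) = F (P (uk k)) - F ustar := by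
      show F (uk (k+1)) - F ustar = _
      rw [huk k]
    rw [huk k, hax]
    exact h
  -- convex interpolation step
  have hconvF : ConvexOn ℝ Set.univ F := hJ.add hH
  have hconv : ∀ k, ∀ t : ℝ, 0 ≤ t → t ≤ 1 →
      a (k+1) ≤ (1-t) * a k + δ / 2 * t ^ 2 * ‖uk k - ustar‖ ^ 2 := by
    intro k t ht0 ht1
    have hw := keyA (uk k) ((1-t) • uk k + t • ustar)
    rw [← huk k] at hw
    have h2 := hconvF.2 (mem_univ (uk k)) (mem_univ ustar) (by linarith : (0:ℝ) ≤ 1 - t) ht0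
      (by ring : (1-t) + t = 1)
    simp only [smul_eq_mul] at h2
    have h2' : F ((1-t) • uk k + t • ustar) ≤ (1-t) * F (uk k) + t * F ustar := h2
    have h3 : ‖((1-t) • uk k + t • ustar) - uk k‖ ^ 2 = t ^ 2 * ‖uk k - ustar‖ ^ 2 := by
      have he : ((1-t) • uk k + t • ustar) - uk k = t • (ustar - uk k) := by module
      rw [he, norm_smul, Real.norm_eq_abs, abs_of_nonneg ht0, mul_pow, norm_sub_rev]
    have hJH : ∀ x, J x + H x = F x := fun x => rfl
    rw [hJH, hJH] at hw
    simp only [hadef]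
    rw [h3] at hw
    clear_value F uk a
    linarith [hw, h2']
  -- split on whether a 1 = 0
  by_cases hA : a 1 ≤ 0
  · refine ⟨‖u0 - ustar‖, norm_nonneg _, 1/2, by norm_num, by norm_num, ?_⟩
    intro k
    match k with
    | 0 => simp [hukdef]
    | (m+1) =>
      have hz : a (m+1) ≤ 0 := le_trans (hamono 1 (m+1) (Nat.le_add_left 1 m)) hA
      have h1 : ‖uk (m+1) - ustar‖ ≤ s * a (m+1) := herr' m
      have h2 : s * a (m+1) ≤ 0 := mul_nonpos_of_nonneg_of_nonpos hs.le hz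
      have h3 : (0:ℝ) ≤ ‖u0 - ustar‖ * (1/2) ^ (m+1) := by positivity
      calc ‖uk (m+1) - ustar‖ ≤ 0 := le_trans h1 h2
        _ ≤ ‖u0 - ustar‖ * (1/2) ^ (m+1) := h3
  · push_neg at hA
    set A : ℝ := a 1 with hAdef
    set t : ℝ := min 1 (δ * s ^ 2 * A)⁻¹ with htdef
    have htpos : 0 < t := lt_min one_pos (by positivity)
    have ht1 : t ≤ 1 := min_le_left _ _
    have htle : t ≤ (δ * s ^ 2 * A)⁻¹ := min_le_right _ _
    set q : ℝ := 1 - t / 2 with hqdef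
    have hq0 : (0:ℝ) < q := by rw [hqdef]; linarith
    have hq1 : q < 1 := by rw [hqdef]; linarith
    -- contraction for k ≥ 1
    have hcontr : ∀ m : ℕ, a (m+2) ≤ q * a (m+1) := by
      intro m
      have hd : ‖uk (m+1) - ustar‖ ≤ s * a (m+1) := herr' m
      have hdn : (0:ℝ) ≤ ‖uk (m+1) - ustar‖ := norm_nonneg _
      have hstep := hconv (m+1) t htpos.le ht1
      have haA : a (m+1) ≤ A := hamono 1 (m+1) (Nat.le_add_left 1 m)
      have hBpos : (0:ℝ) < δ * s ^ 2 * A := by positivity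
      have hkey : δ * t * s ^ 2 * a (m+1) ≤ 1 := by
        calc δ * t * s ^ 2 * a (m+1) ≤ δ * t * s ^ 2 * A :=
              mul_le_mul_of_nonneg_left haA (by positivity)
          _ = t * (δ * s ^ 2 * A) := by ring
          _ ≤ (δ * s ^ 2 * A)⁻¹ * (δ * s ^ 2 * A) :=
              mul_le_mul_of_nonneg_right htle hBpos.le
          _ = 1 := inv_mul_cancel₀ hBpos.ne'
      have hd2 : ‖uk (m+1) - ustar‖ ^ 2 ≤ (s * a (m+1)) ^ 2 :=
        pow_le_pow_left₀ hdn hd 2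
      have h6 : δ / 2 * t ^ 2 * ‖uk (m+1) - ustar‖ ^ 2 ≤ δ / 2 * t ^ 2 * (s * a (m+1)) ^ 2 :=
        mul_le_mul_of_nonneg_left hd2 (by positivity)
      have h7 := mul_le_mul_of_nonneg_left hkey
        (div_nonneg (mul_nonneg htpos.le (ha0 (m+1))) (by norm_num : (0:ℝ) ≤ 2))
      calc a (m+2) ≤ (1-t) * a (m+1) + δ / 2 * t ^ 2 * ‖uk (m+1) - ustar‖ ^ 2 := hstep
        _ ≤ (1-t) * a (m+1) + δ / 2 * t ^ 2 * (s * a (m+1)) ^ 2 := by linarith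
        _ = (1-t) * a (m+1) + t * a (m+1) / 2 * (δ * t * s ^ 2 * a (m+1)) := by ring
        _ ≤ (1-t) * a (m+1) + t * a (m+1) / 2 * 1 := by linarith
        _ = (1 - t / 2) * a (m+1) := by ring
        _ = q * a (m+1) := by rw [hqdef]
    have hgeo : ∀ m : ℕ, a (m+1) ≤ A * q ^ m := by
      intro m
      induction m with
      | zero => simp [hAdef]
      | succ j ih =>
        calc a (j+2) ≤ q * a (j+1) := hcontr j
          _ ≤ q * (A * q ^ j) := mul_le_mul_of_nonneg_left ih hq0.le
          _ = A * q ^ (j+1) := by ring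
    refine ⟨max ‖u0 - ustar‖ (s * A / q), le_max_of_le_left (norm_nonneg _), q, hq0.le, hq1, ?_⟩
    intro k
    match k with
    | 0 => simpa [hukdef] using le_max_left ‖u0 - ustar‖ (s * A / q)
    | (m+1) =>
      have h1 : ‖uk (m+1) - ustar‖ ≤ s * a (m+1) := herr' m
      have h2 : s * a (m+1) ≤ s * (A * q ^ m) :=
        mul_le_mul_of_nonneg_left (hgeo m) hs.le
      have h3 : s * (A * q ^ m) = (s * A / q) * q ^ (m+1) := by
        field_simp
        ring
      have h4 : (s * A / q) * q ^ (m+1) ≤ max ‖u0 - ustar‖ (s * A / q) * q ^ (m+1) :=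
        mul_le_mul_of_nonneg_right (le_max_right _ _) (by positivity)
      calc ‖uk (m+1) - ustar‖ ≤ s * a (m+1) := h1
        _ ≤ s * (A * q ^ m) := h2
        _ = (s * A / q) * q ^ (m+1) := h3
        _ ≤ max ‖u0 - ustar‖ (s * A / q) * q ^ (m+1) := h4
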